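/- Let M = [[A, B], [C, A^T]] be a symplectic Wonenburger matrix and a a real simple eigenvalue of A with a ≠ ±1, with A^T v = a v and A w = a w for nonzero vectors v, w. Then (v^T B v)(w^T C w) has the sign of (a^2 - 1); in particular if |a| < 1 (elliptic case) the B-sign and C-sign are opposite, and if |a| > 1 (hyperbolic case) they agree. -/

import Mathlib

open Matrix Polynomial

lemma aeval_mulVec_eig {n : ℕ} (M : Matrix (Fin n) (Fin n) ℝ) (a : ℝ) (x : Fin n → ℝ)
    (hx : M.mulVec x = a • x) (f : ℝ[X]) :
    (aeval M f).mulVec x = f.eval a • x := by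
  induction f using Polynomial.induction_on' with
  | add p q hp hq => simp [add_mulVec, hp, hq, add_smul]
  | monomial k c =>
      have hpow : ∀ k : ℕ, (M ^ k).mulVec x = a ^ k • x := by
        intro k
        induction k with
        | zero => simp [one_mulVec]
        | succ k ih =>
            rw [pow_succ', pow_succ', ← mulVec_mulVec, ih]
            simp [mulVec_smul, hx, smul_smul, mul_comm]
      simp [aeval_monomial, Algebra.algebraMap_eq_smul_one, smul_mulVec,
        hpow, smul_smul, eval_monomial]

lemma aeval_transpose' {n : ℕ} (M : Matrix (Fin n) (Fin n) ℝ) (f : ℝ[X]) :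
    (aeval M f)ᵀ = aeval Mᵀ f := by
  induction f using Polynomial.induction_on' with
  | add p q hp hq => simp [hp, hq, transpose_add]
  | monomial k c =>
      simp [aeval_monomial, Algebra.algebraMap_eq_smul_one, transpose_smul,
        transpose_mul, transpose_pow, transpose_one]

lemma charpoly_sub_smul_one {n : ℕ} (M : Matrix (Fin n) (Fin n) ℝ) (a : ℝ) :
    (M - a • 1).charpoly = (M.charpoly).comp (X + C a) := by
  rw [Polynomial.comp_eq_aeval, Matrix.charpoly, Matrix.charpoly, ← AlgHom.coe_toRingHom,
    RingHom.map_det]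
  congr 1
  ext i j
  by_cases h : i = j
  · subst h
    simp [charmatrix_apply, Matrix.sub_apply, Matrix.smul_apply, Matrix.one_apply, C_sub, C_mul]
    ring
  · simp [charmatrix_apply, Matrix.sub_apply, Matrix.smul_apply, Matrix.one_apply, h,
      Matrix.diagonal_apply_ne _ h]

lemma charpoly_transpose' {n : ℕ} (M : Matrix (Fin n) (Fin n) ℝ) :
    Mᵀ.charpoly = M.charpoly := by
  rw [Matrix.charpoly, Matrix.charpoly, ← Matrix.det_transpose (charmatrix M)]
  congr 1
  ext i j
  by_cases h : i = j
  · subst h; simp [charmatrix_apply, Matrix.transpose_apply]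
  · simp [charmatrix_apply, Matrix.transpose_apply, Matrix.diagonal_apply_ne,
      Ne.symm h, h]

lemma eigvec_span {n : ℕ} (M : Matrix (Fin n) (Fin n) ℝ) (a : ℝ)
    (hs : (M.charpoly).rootMultiplicity a = 1)
    (w : Fin n → ℝ) (hw : w ≠ 0) (hwa : M.mulVec w = a • w)
    (x : Fin n → ℝ) (hx : M.mulVec x = a • x) : ∃ c : ℝ, x = c • w := by
  set φ : Module.End ℝ (Fin n → ℝ) := Matrix.toLin' (M - a • 1) with hφ
  have hker : ∀ y : Fin n → ℝ, M.mulVec y = a • y → y ∈ φ.maxGenEigenspace 0 := by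
    intro y hy
    rw [Module.End.mem_maxGenEigenspace]
    refine ⟨1, ?_⟩
    simp only [zero_smul, sub_zero, pow_one, hφ, Matrix.toLin'_apply]
    rw [sub_mulVec, hy]
    simp [smul_mulVec, one_mulVec]
  have hrank : Module.finrank ℝ (φ.maxGenEigenspace 0) = 1 := by
    rw [LinearMap.finrank_maxGenEigenspace_zero_eq]
    have h1 : LinearMap.charpoly φ = (M - a • 1).charpoly := by
      rw [← LinearMap.charpoly_toMatrix φ (Pi.basisFun ℝ (Fin n))]
      congr 1
      rw [hφ, LinearMap.toMatrix_eq_toMatrix', LinearMap.toMatrix'_toLin']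
    rw [h1, charpoly_sub_smul_one, ← Polynomial.rootMultiplicity_eq_natTrailingDegree, hs]
  have hspan : Submodule.span ℝ {w} = φ.maxGenEigenspace 0 := by
    apply Submodule.eq_of_le_of_finrank_le
    · rw [Submodule.span_le, Set.singleton_subset_iff]; exact hker w hwa
    · rw [hrank, finrank_span_singleton hw]
  have := hker x hx
  rw [← hspan, Submodule.mem_span_singleton] at this
  obtain ⟨c, hc⟩ := this
  exact ⟨c, hc.symm⟩

/-- For a symplectic Wonenburger matrix `M = [[A,B],[C,Aᵀ]]` and a real simple eigenvalue
`a ≠ ±1` of `A`, with `Aᵀ v = a v` and `A w = a w` (`v, w ≠ 0`), the product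
`(vᵀBv)·(wᵀCw)` has the sign of `a² - 1`: in the elliptic case `|a| < 1` the B-sign and
C-sign are opposite, in the hyperbolic case `|a| > 1` they agree. -/
theorem b_sign_c_sign (n : ℕ) (A B C : Matrix (Fin n) (Fin n) ℝ)
    (hB : B = Bᵀ) (hC : C = Cᵀ) (hAB : A * B = B * Aᵀ) (hAC : Aᵀ * C = C * A)
    (hA : A * A - B * C = 1) (a : ℝ)
    (hsimple : (Matrix.charpoly A).rootMultiplicity a = 1)
    (ha1 : a ≠ 1) (ha2 : a ≠ -1)
    (v w : Fin n → ℝ) (hv : v ≠ 0) (hw : w ≠ 0)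
    (hva : Aᵀ.mulVec v = a • v) (hwa : A.mulVec w = a • w) :
    0 < ((v ⬝ᵥ B.mulVec v) * (w ⬝ᵥ C.mulVec w)) * (a ^ 2 - 1) ∧
    (a ^ 2 < 1 → (v ⬝ᵥ B.mulVec v) * (w ⬝ᵥ C.mulVec w) < 0) ∧
    (1 < a ^ 2 → 0 < (v ⬝ᵥ B.mulVec v) * (w ⬝ᵥ C.mulVec w)) := by
  have ha : a ^ 2 - 1 ≠ 0 := by
    intro h
    have : (a - 1) * (a + 1) = 0 := by ring_nf; linarith [h]
    rcases mul_eq_zero.mp this with h' | h'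
    · exact ha1 (by linarith)
    · exact ha2 (by linarith)
  -- charpoly factorisation
  have hpne : A.charpoly ≠ 0 := (Matrix.charpoly_monic A).ne_zero
  have hroot : A.charpoly.IsRoot a := by
    rw [← Polynomial.rootMultiplicity_pos hpne, hsimple]; norm_num
  set q : ℝ[X] := A.charpoly /ₘ (X - Polynomial.C a) with hqdef
  have hfac : (X - Polynomial.C a) * q = A.charpoly :=
    Polynomial.mul_divByMonic_eq_iff_isRoot.mpr hroot
  have hqa : q.eval a ≠ 0 := by
    intro h
    obtain ⟨r, hr⟩ := Polynomial.dvd_iff_isRoot.mpr h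
    have hdvd : (X - Polynomial.C a) ^ 2 ∣ A.charpoly :=
      ⟨r, by rw [← hfac, hr]; ring⟩
    have := (Polynomial.le_rootMultiplicity_iff hpne).mpr hdvd
    rw [hsimple] at this
    omega
  have hsT : (Matrix.charpoly Aᵀ).rootMultiplicity a = 1 := by
    rw [charpoly_transpose']; exact hsimple
  -- Bv and Cw are eigenvectors
  have hBv : A.mulVec (B.mulVec v) = a • (B.mulVec v) := by
    rw [mulVec_mulVec, hAB, ← mulVec_mulVec, hva, mulVec_smul]
  obtain ⟨β, hβ⟩ := eigvec_span A a hsimple w hw hwa _ hBv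
  have hCw : Aᵀ.mulVec (C.mulVec w) = a • (C.mulVec w) := by
    rw [mulVec_mulVec, hAC, ← mulVec_mulVec, hwa, mulVec_smul]
  obtain ⟨γ, hγ⟩ := eigvec_span Aᵀ a hsT v hv hva _ hCw
  -- β * γ = a² - 1
  have hβγ : γ * β = a ^ 2 - 1 := by
    have h1 : (B * C).mulVec w = (γ * β) • w := by
      rw [← mulVec_mulVec, hγ, mulVec_smul, hβ, smul_smul]
    have h2 : (B * C).mulVec w = (a ^ 2 - 1) • w := by
      have h3 : (A * A).mulVec w - (B * C).mulVec w = w := by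
        rw [← sub_mulVec, hA, one_mulVec]
      have h4 : (A * A).mulVec w = (a ^ 2) • w := by
        rw [← mulVec_mulVec, hwa, mulVec_smul, hwa, smul_smul, sq]
      rw [h4] at h3
      have h5 : (B * C).mulVec w = a ^ 2 • w - w := by
        have h6 := sub_eq_iff_eq_add.mp h3
        exact eq_sub_of_add_eq (by rw [add_comm]; exact h6.symm)
      rw [h5, sub_smul, one_smul]
    have := h1.symm.trans h2
    have h5 : (γ * β - (a ^ 2 - 1)) • w = 0 := by
      rw [sub_smul, this, sub_self]
    rcases smul_eq_zero.mp h5 with h | h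
    · linarith [sub_eq_zero.mp (by linarith [h] : γ * β - (a ^ 2 - 1) = 0)]
    · exact absurd h hw
  -- v ⬝ᵥ w ≠ 0
  have hvw : v ⬝ᵥ w ≠ 0 := by
    intro hvw0
    have hAq : (A - a • 1) * (aeval A q) = 0 := by
      have h := Matrix.aeval_self_charpoly A
      rw [← hfac, _root_.map_mul, _root_.map_sub, aeval_X, aeval_C,
        Algebra.algebraMap_eq_smul_one] at h
      exact h
    have hv0 : ∀ x : Fin n → ℝ, v ⬝ᵥ x = 0 := by
      intro x
      have h1 : A.mulVec ((aeval A q).mulVec x) = a • ((aeval A q).mulVec x) := by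
        have h0 : (A - a • 1).mulVec ((aeval A q).mulVec x) = 0 := by
          rw [mulVec_mulVec, hAq, zero_mulVec]
        rw [sub_mulVec, smul_mulVec, one_mulVec, sub_eq_zero] at h0
        exact h0
      obtain ⟨c, hc⟩ := eigvec_span A a hsimple w hw hwa _ h1
      have h2 : v ⬝ᵥ (aeval A q).mulVec x = 0 := by
        rw [hc, dotProduct_smul, smul_eq_mul, hvw0, mul_zero]
      have h3 : v ⬝ᵥ (aeval A q).mulVec x = q.eval a * (v ⬝ᵥ x) := by
        rw [dotProduct_mulVec, ← Matrix.mulVec_transpose, aeval_transpose',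
          aeval_mulVec_eig Aᵀ a v hva q, smul_dotProduct, smul_eq_mul]
      rw [h2] at h3
      exact (mul_eq_zero.mp h3.symm).resolve_left hqa
    have := hv0 v
    rw [dotProduct_self_eq_zero] at this
    exact hv this
  -- final computation
  have hvBv : v ⬝ᵥ B.mulVec v = β * (v ⬝ᵥ w) := by
    rw [hβ, dotProduct_smul, smul_eq_mul]
  have hwCw : w ⬝ᵥ C.mulVec w = γ * (v ⬝ᵥ w) := by
    rw [hγ, dotProduct_smul, smul_eq_mul, dotProduct_comm]
  have hprod : (v ⬝ᵥ B.mulVec v) * (w ⬝ᵥ C.mulVec w) = (a ^ 2 - 1) * (v ⬝ᵥ w) ^ 2 := by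
    rw [hvBv, hwCw, ← hβγ]; ring
  have hsq : 0 < (v ⬝ᵥ w) ^ 2 := pow_two_pos_of_ne_zero hvw
  refine ⟨?_, ?_, ?_⟩
  · rw [hprod]
    have h2 : 0 < (a ^ 2 - 1) ^ 2 := pow_two_pos_of_ne_zero ha
    nlinarith
  · intro h
    rw [hprod]
    exact mul_neg_of_neg_of_pos (by linarith) hsq
  · intro h
    rw [hprod]
    exact mul_pos (by linarith) hsq
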